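/- Mertens' third theorem in 𝔽_q[T]: For fixed prime power q, Π_{P ∈ 𝒫, deg P ≤ n} (1 − 1/|P|)^{-1} ∼ e^γ · n as n → ∞, where γ is the Euler–Mascheroni constant and the product is over monic irreducible polynomials of degree at most n. -/

import Mathlib

open scoped BigOperators
open Filter

noncomputable section

namespace FFEH

variable {Fq : Type} [Field Fq] [Fintype Fq]

open Classical in
/-- The absolute value `|A| = q ^ deg A` of a polynomial `A ∈ 𝔽_q[T]`, with `|0| = 0`. -/
def absP (A : Polynomial Fq) : ℝ :=
  if A = 0 then 0 else (Fintype.card Fq : ℝ) ^ A.natDegree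

/-- Monic irreducible ("prime") polynomials. -/
def IsMonicPrime (P : Polynomial Fq) : Prop := P.Monic ∧ Irreducible P

/-- A Dirichlet character of modulus `R` on `𝔽_q[T]`. -/
structure IsDirichletChar (R : Polynomial Fq) (χ : Polynomial Fq → ℂ) : Prop where
  map_one' : χ 1 = 1
  map_mul' : ∀ A B : Polynomial Fq, χ (A * B) = χ A * χ B
  congr' : ∀ A B : Polynomial Fq, R ∣ A - B → χ A = χ B
  eq_zero_iff' : ∀ A : Polynomial Fq, χ A = 0 ↔ ¬ IsCoprime A R

/-- A primitive Dirichlet character of modulus `R`: one induced by no character of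
modulus of strictly smaller degree. -/
def IsPrimitiveChar (R : Polynomial Fq) (χ : Polynomial Fq → ℂ) : Prop :=
  IsDirichletChar R χ ∧
    ∀ S : Polynomial Fq, S.Monic → S ∣ R → S.natDegree < R.natDegree →
      ¬ ∃ χ₁ : Polynomial Fq → ℂ, IsDirichletChar S χ₁ ∧
        ∀ A : Polynomial Fq, IsCoprime A R → χ A = χ₁ A

/-- An even character: trivial on the nonzero constants. -/
def IsEvenChar (χ : Polynomial Fq → ℂ) : Prop :=
  ∀ a : Fq, a ≠ 0 → χ (Polynomial.C a) = 1

/-- `φ*(R)`: the number of primitive characters of modulus `R`. -/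
def numPrimChars (R : Polynomial Fq) : ℕ :=
  Set.ncard {χ : Polynomial Fq → ℂ | IsPrimitiveChar R χ}

/-- The Euler totient `φ(R) = #(𝔽_q[T]/(R))ˣ`. -/
def phiP (R : Polynomial Fq) : ℕ :=
  Nat.card ((Polynomial Fq ⧸ Ideal.span {R})ˣ)

/-- `ω(A)`: the number of distinct monic prime divisors of `A`. -/
def omegaP (A : Polynomial Fq) : ℕ :=
  Set.ncard {P : Polynomial Fq | IsMonicPrime P ∧ P ∣ A}

open Classical in
/-- The Möbius function on monic polynomials. -/
def muP (A : Polynomial Fq) : ℤ :=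
  if Squarefree A then (-1) ^ omegaP A else 0

/-- `d_k(A)`: the number of ways of writing `A` as an ordered product of `k` monic
polynomials. -/
def dk (k : ℕ) (A : Polynomial Fq) : ℕ :=
  Set.ncard {v : Fin k → Polynomial Fq | (∀ i, (v i).Monic) ∧ ∏ i, v i = A}

/-- `A ∈ 𝒮_ℳ(X)`: `A` is monic and all its prime divisors have degree at most `X`. -/
def SmoothM (X : ℕ) (A : Polynomial Fq) : Prop :=
  A.Monic ∧ ∀ P : Polynomial Fq, IsMonicPrime P → P ∣ A → P.natDegree ≤ X

/-- The Dirichlet `L`-function of a non-trivial character `χ` of modulus `R`: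
`L(s,χ) = ∑_{A monic, deg A < deg R} χ(A) |A|^{-s}`. -/
def Lfun (R : Polynomial Fq) (χ : Polynomial Fq → ℂ) (s : ℂ) : ℂ :=
  ∑ᶠ A ∈ {A : Polynomial Fq | A.Monic ∧ A.natDegree < R.natDegree},
    χ A * (absP A : ℂ) ^ (-s)

open Classical in
/-- The von Mangoldt function: `Λ(A) = log |P|` if `A = P^j` (`P` monic prime, `j ≥ 1`),
and `0` otherwise. -/
def LambdaP (A : Polynomial Fq) : ℝ :=
  if h : ∃ P : Polynomial Fq, (P.Monic ∧ Irreducible P) ∧ ∃ j : ℕ, 1 ≤ j ∧ A = P ^ j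
  then Real.log (absP h.choose) else 0

/-- The partial Euler product `P_X(s,χ)`. -/
def PX (X : ℕ) (χ : Polynomial Fq → ℂ) (s : ℂ) : ℂ :=
  Complex.exp (∑ᶠ A ∈ {A : Polynomial Fq | A.Monic ∧ A.natDegree ≤ X},
    χ A * (LambdaP A : ℂ) / ((absP A : ℂ) ^ s * (Real.log (absP A) : ℂ)))

/-- The `L`-function of `χ` as a polynomial in the variable `w = q^{-s}`. -/
def LPoly (R : Polynomial Fq) (χ : Polynomial Fq → ℂ) : Polynomial ℂ :=
  ∑ n ∈ Finset.range R.natDegree,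
    Polynomial.C (∑ᶠ A ∈ {A : Polynomial Fq | A.Monic ∧ A.natDegree = n}, χ A) *
      Polynomial.X ^ n

/-- The sum of `f` over the zeros of `L(s,χ)` counted with multiplicity, including
all the vertical `2π/log q`-periodic repetitions: the zeros are exactly the points
`-log w / log q + 2πim/log q` for `w` a root (with multiplicity) of the `L`-polynomial
and `m ∈ ℤ`. -/
def zeroSum (R : Polynomial Fq) (χ : Polynomial Fq → ℂ) (f : ℂ → ℂ) : ℂ :=
  ((LPoly R χ).roots.map (fun w => ∑' m : ℤ,
    f (-Complex.log w / (Real.log (Fintype.card Fq) : ℂ) +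
        2 * Real.pi * Complex.I * (m : ℂ) / (Real.log (Fintype.card Fq) : ℂ)))).sum

/-- The exponential integral `E₁(y) = ∫_{w=y}^{y+∞} e^{-w}/w dw`, along the horizontal
ray from `y` in the direction of `+1`. -/
def E1 (y : ℂ) : ℂ :=
  ∫ t : ℝ in Set.Ioi (0 : ℝ), Complex.exp (-(y + (t : ℂ))) / (y + (t : ℂ))

/-- `U(z) = ∫_0^∞ u(x) E₁(z log x) dx`. -/
def Ufun (u : ℝ → ℝ) (z : ℂ) : ℂ :=
  ∫ x : ℝ in Set.Ioi (0 : ℝ), (u x : ℂ) * E1 (z * (Real.log x : ℂ))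

/-- The Mellin transform `ũ(s) = ∫_0^∞ x^{s-1} u(x) dx`. -/
def mellinT (u : ℝ → ℝ) (s : ℂ) : ℂ :=
  ∫ x : ℝ in Set.Ioi (0 : ℝ), (x : ℂ) ^ (s - 1) * (u x : ℂ)

/-- The arithmetic-factor constant `a(k)`. -/
def aConst (Fq : Type) [Field Fq] [Fintype Fq] (k : ℕ) : ℝ :=
  ∏' P : {P : Polynomial Fq // IsMonicPrime P},
    (1 - (absP P.1)⁻¹) ^ (k ^ 2) * ∑' m : ℕ, (dk k (P.1 ^ m) : ℝ) ^ 2 / absP (P.1 ^ m)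

/-- The modified partial Euler product `P_X^*(s,χ)`. -/
def PXstar (X : ℕ) (χ : Polynomial Fq → ℂ) (s : ℂ) : ℂ :=
  (∏ᶠ P ∈ {P : Polynomial Fq | IsMonicPrime P ∧ P.natDegree ≤ X},
      (1 - χ P / (absP P : ℂ) ^ s)⁻¹) *
    ∏ᶠ P ∈ {P : Polynomial Fq | IsMonicPrime P ∧ X < 2 * P.natDegree ∧ P.natDegree ≤ X},
      (1 + χ P ^ 2 / (2 * (absP P : ℂ) ^ (2 * s)))⁻¹

open Classical in
/-- The multiplicity of `P` in `A` (for `A ≠ 0`). -/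
def multP (P A : Polynomial Fq) : ℕ :=
  if A = 0 then 0 else Nat.findGreatest (fun e => P ^ e ∣ A) A.natDegree

/-- Local coefficients of the Dirichlet series of `P_X^*(s,χ)^k`. -/
def locAlpha (k X : ℕ) (P : Polynomial Fq) (m : ℕ) : ℝ :=
  if m = 0 then 1
  else if X < P.natDegree then 0
  else if 2 * P.natDegree ≤ X then (dk k (P ^ m) : ℝ)
  else ∑ j ∈ Finset.range (m / 2 + 1),
    (dk k (P ^ (m - 2 * j)) : ℝ) * (dk k (P ^ j) : ℝ) * (-(2 : ℝ)⁻¹) ^ j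

/-- `α_k(A)`: the coefficients of the Dirichlet series `P_X^*(s,χ)^k = ∑ α_k(A)χ(A)|A|^{-s}`. -/
def alphaK (k X : ℕ) (A : Polynomial Fq) : ℝ :=
  ∏ᶠ P ∈ {P : Polynomial Fq | IsMonicPrime P ∧ P ∣ A}, locAlpha k X P (multP P A)

/-- Local coefficients of the Dirichlet series of `P_X^*(s,χ)^{-1}`. -/
def locAlphaNeg (X : ℕ) (P : Polynomial Fq) (m : ℕ) : ℝ :=
  if m = 0 then 1
  else if X < P.natDegree then 0
  else if m = 1 then -1
  else if m = 2 then (if 2 * P.natDegree ≤ X then 0 else 2⁻¹)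
  else if m = 3 then (if 2 * P.natDegree ≤ X then 0 else -2⁻¹)
  else 0

/-- The multiplicative function `α_{-1}`. -/
def alphaNeg (X : ℕ) (A : Polynomial Fq) : ℝ :=
  ∏ᶠ P ∈ {P : Polynomial Fq | IsMonicPrime P ∧ P ∣ A}, locAlphaNeg X P (multP P A)

/-- The cosine integral `Ci(y) = -∫_y^∞ cos t / t dt`. -/
def Ci (y : ℝ) : ℝ := -∫ t : ℝ in Set.Ioi y, Real.cos t / t

open Classical in
/-- The greatest common monic divisor of two polynomials. -/
def gcdP (A B : Polynomial Fq) : Polynomial Fq :=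
  Polynomial.C ((EuclideanDomain.gcd A B).leadingCoeff)⁻¹ * EuclideanDomain.gcd A B

/-- The decomposition shape of Lemma `A₁A₂A₃ = B₁B₂B₃`: all factors monic, the
coprimality conditions `gcd(V_{i,j}, V_{k,l}) = 1` for `i ≠ k` and `j ≠ l`, and the six
product equations. -/
def Decomp3 (A1 A2 A3 B1 B2 B3 G1 G2 G3 V12 V13 V21 V23 V31 V32 : Polynomial Fq) : Prop :=
  G1.Monic ∧ G2.Monic ∧ G3.Monic ∧ V12.Monic ∧ V13.Monic ∧ V21.Monic ∧
    V23.Monic ∧ V31.Monic ∧ V32.Monic ∧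
  IsCoprime V12 V21 ∧ IsCoprime V12 V23 ∧ IsCoprime V12 V31 ∧
  IsCoprime V13 V21 ∧ IsCoprime V13 V31 ∧ IsCoprime V13 V32 ∧
  IsCoprime V21 V32 ∧ IsCoprime V23 V31 ∧ IsCoprime V23 V32 ∧
  A1 = G1 * V12 * V13 ∧ B1 = G1 * V21 * V31 ∧
  A2 = G2 * V21 * V23 ∧ B2 = G2 * V12 * V32 ∧
  A3 = G3 * V31 * V32 ∧ B3 = G3 * V13 * V23

section MertensAux

open Polynomial Real



lemma nat_pow_sub_one_dvd_imp {q : ℕ} (hq : 2 ≤ q) {d : ℕ} (hd : d ≠ 0) :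
    ∀ m : ℕ, (q ^ d - 1 ∣ q ^ m - 1) → d ∣ m := by
  intro m
  induction m using Nat.strong_induction_on with
  | _ m ih =>
    intro h
    by_cases hmd : m < d
    · have h1 : q ^ m < q ^ d := Nat.pow_lt_pow_right (by omega) hmd
      have hm1 : 1 ≤ q ^ m := Nat.one_le_pow _ _ (by omega)
      have h0 : q ^ m - 1 = 0 := Nat.eq_zero_of_dvd_of_lt h (by omega)
      have hqm : q ^ m = 1 := by omega
      have hm0 : m = 0 := by
        by_contra hn
        have := Nat.one_lt_pow hn hq
        omega
      simp [hm0]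
    · push_neg at hmd
      have ha : 1 ≤ q ^ (m - d) := Nat.one_le_pow _ _ (by omega)
      have hb : 1 ≤ q ^ d := Nat.one_le_pow _ _ (by omega)
      have hmul : q ^ (m - d) * q ^ d = q ^ m := by
        rw [← pow_add]; congr 1; omega
      have hle : q ^ (m - d) ≤ q ^ m := Nat.pow_le_pow_right (by omega) (by omega)
      have hsplit : q ^ m - 1 = q ^ (m - d) * (q ^ d - 1) + (q ^ (m - d) - 1) := by
        rw [Nat.mul_sub, mul_one, hmul]
        omega
      have hdvd2 : q ^ d - 1 ∣ q ^ (m - d) - 1 := by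
        have hA : q ^ d - 1 ∣ q ^ (m - d) * (q ^ d - 1) := dvd_mul_left _ _
        rw [hsplit] at h
        exact (Nat.dvd_add_right hA).mp h
      rcases Nat.eq_zero_or_pos (m - d) with h0 | hpos
      · have : m = d := by omega
        simp [this]
      · have hrec : d ∣ m - d := ih (m - d) (by omega) hdvd2
        have : d ∣ (m - d) + d := hrec.add dvd_rfl
        rwa [Nat.sub_add_cancel hmd] at this


lemma finite_natDegree_le (n : ℕ) : {P : Polynomial Fq | P.natDegree ≤ n}.Finite := by
  have hsub : {P : Polynomial Fq | P.natDegree ≤ n} ⊆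
      Set.range (fun c : Fin (n+1) → Fq => ∑ i : Fin (n+1), Polynomial.C (c i) * Polynomial.X ^ (i : ℕ)) := by
    intro P hP
    refine ⟨fun i => P.coeff i, ?_⟩
    conv_rhs => rw [P.as_sum_range' (n+1) (Nat.lt_succ_of_le hP)]
    simp only [Fin.sum_univ_eq_sum_range (fun i => Polynomial.C (P.coeff i) * Polynomial.X ^ (i:ℕ))]
    simp [Polynomial.C_mul_X_pow_eq_monomial]
  exact (Set.finite_range _).subset hsub

lemma finite_primesEq (d : ℕ) : {P : Polynomial Fq | IsMonicPrime P ∧ P.natDegree = d}.Finite :=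
  (finite_natDegree_le d).subset (fun _ hP => hP.2.le)

lemma finite_primesLE (n : ℕ) : {P : Polynomial Fq | IsMonicPrime P ∧ P.natDegree ≤ n}.Finite :=
  (finite_natDegree_le n).subset (fun _ hP => hP.2)

lemma finite_primesDvd {m : ℕ} (hm : m ≠ 0) :
    {P : Polynomial Fq | IsMonicPrime P ∧ P.natDegree ∣ m}.Finite :=
  (finite_natDegree_le m).subset (fun _ hP => Nat.le_of_dvd (Nat.pos_of_ne_zero hm) hP.2)

def primesEq (Fq : Type) [Field Fq] [Fintype Fq] (d : ℕ) : Finset (Polynomial Fq) :=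
  (finite_primesEq d).toFinset

def primesDvd (Fq : Type) [Field Fq] [Fintype Fq] {m : ℕ} (hm : m ≠ 0) : Finset (Polynomial Fq) :=
  (finite_primesDvd hm).toFinset

lemma mem_primesEq {d : ℕ} {P : Polynomial Fq} :
    P ∈ primesEq Fq d ↔ IsMonicPrime P ∧ P.natDegree = d := Set.Finite.mem_toFinset _

lemma mem_primesDvd {m : ℕ} (hm : m ≠ 0) {P : Polynomial Fq} :
    P ∈ primesDvd Fq hm ↔ IsMonicPrime P ∧ P.natDegree ∣ m := Set.Finite.mem_toFinset _

/-- `π(d)`: number of monic irreducible polynomials of degree `d`. -/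
def piq (Fq : Type) [Field Fq] [Fintype Fq] (d : ℕ) : ℕ := (primesEq Fq d).card

lemma dvd_X_pow_card_sub_X_iff {P : Polynomial Fq} (hP : IsMonicPrime P) {m : ℕ} (hm : m ≠ 0) :
    P ∣ (X ^ (Fintype.card Fq) ^ m - X) ↔ P.natDegree ∣ m := by
  classical
  set q := Fintype.card Fq with hqdef
  have hq2 : 2 ≤ q := Fintype.one_lt_card
  haveI : Fact (Irreducible P) := ⟨hP.2⟩
  have hP0 : P ≠ 0 := hP.2.ne_zero
  set K := AdjoinRoot P with hK
  let pb : PowerBasis Fq K := AdjoinRoot.powerBasis hP0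
  haveI : Module.Finite Fq K := Module.Finite.of_basis pb.basis
  haveI : Finite K := Module.finite_of_finite Fq
  haveI : Fintype K := Fintype.ofFinite K
  have hcard : Fintype.card K = q ^ P.natDegree := by
    rw [Module.card_eq_pow_finrank (K := Fq) (V := K), pb.finrank, AdjoinRoot.powerBasis_dim]
  have hiff : (P ∣ (X ^ q ^ m - X : Polynomial Fq)) ↔
      (AdjoinRoot.root P) ^ q ^ m = AdjoinRoot.root P := by
    rw [← AdjoinRoot.mk_eq_zero]
    rw [map_sub, map_pow, AdjoinRoot.mk_X, sub_eq_zero]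
  rw [hiff]
  constructor
  · intro hx
    -- char facts
    set p := ringChar Fq with hp
    haveI hfact : Fact (Nat.Prime p) := ⟨CharP.char_is_prime Fq p⟩
    haveI : CharP K p := charP_of_injective_algebraMap (algebraMap Fq K).injective p
    obtain ⟨e, _, hqe⟩ := FiniteField.card Fq p
    have hall : ∀ y : K, y ^ q ^ m = y := by
      intro y
      have hy : y ∈ Algebra.adjoin Fq ({AdjoinRoot.root P} : Set K) := by
        rw [AdjoinRoot.adjoinRoot_eq_top]; trivial
      induction hy using Algebra.adjoin_induction with
      | mem x hx' => rw [Set.mem_singleton_iff] at hx'; rw [hx']; exact hx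
      | algebraMap r => rw [← map_pow, FiniteField.pow_card_pow]
      | add x y _ _ hx' hy' =>
          have hpow : q ^ m = p ^ ((e : ℕ) * m) := by rw [pow_mul, ← hqe]
          rw [hpow] at hx' hy' ⊢
          rw [add_pow_char_pow, hx', hy']
      | mul x y _ _ hx' hy' => rw [mul_pow, hx', hy']
    obtain ⟨g, hg⟩ := IsCyclic.exists_generator (α := Kˣ)
    have horder : orderOf g = q ^ P.natDegree - 1 := by
      rw [orderOf_eq_card_of_forall_mem_zpowers hg, Nat.card_eq_fintype_card, Fintype.card_units, hcard]
    have hgm : g ^ (q ^ m - 1) = 1 := by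
      have h1 : ((g : K)) ^ q ^ m = (g : K) := hall g
      have hq1 : 1 ≤ q ^ m := Nat.one_le_pow _ _ (by omega)
      have h2 : (g : K) ^ (q ^ m - 1) * (g : K) = (g : K) := by
        rw [← pow_succ]
        rw [show q ^ m - 1 + 1 = q ^ m by omega]
        exact h1
      have h3 : (g : K) ^ (q ^ m - 1) = 1 := by
        have := mul_right_cancel₀ (g.ne_zero) (h2.trans (one_mul (g : K)).symm)
        exact this
      ext
      push_cast
      exact h3
    have hdvd : q ^ P.natDegree - 1 ∣ q ^ m - 1 := by
      rw [← horder]; exact orderOf_dvd_of_pow_eq_one hgm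
    have hdeg : P.natDegree ≠ 0 := by
      intro h0
      exact hP.2.not_isUnit ((hP.1.natDegree_eq_zero.mp h0) ▸ isUnit_one)
    exact nat_pow_sub_one_dvd_imp hq2 hdeg m hdvd
  · rintro ⟨t, rfl⟩
    rw [pow_mul, ← hcard]
    exact FiniteField.pow_card_pow t _

lemma X_pow_card_pow_sub_X_eq_prod {m : ℕ} (hm : m ≠ 0) :
    (X ^ (Fintype.card Fq) ^ m - X : Polynomial Fq) = ∏ P ∈ primesDvd Fq hm, P := by
  classical
  set q := Fintype.card Fq with hqdef
  have hq2 : 2 ≤ q := Fintype.one_lt_card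
  set f : Polynomial Fq := X ^ q ^ m - X with hfdef
  have hf0 : f ≠ 0 := FiniteField.X_pow_card_pow_sub_X_ne_zero Fq hm (by omega)
  have hfm : f.Monic := by
    apply (monic_X_pow (q ^ m)).sub_of_left
    rw [degree_X_pow, degree_X]
    exact_mod_cast Nat.one_lt_pow hm hq2
  have hsep : f.Separable := by
    set p := ringChar Fq with hp
    haveI hfact : Fact (Nat.Prime p) := ⟨CharP.char_is_prime Fq p⟩
    obtain ⟨e, hpe, hqe⟩ := FiniteField.card Fq p
    have hpq1 : p ∣ q := by
      rw [hqdef, hqe]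
      exact dvd_pow_self p e.pos.ne'
    have hpq : p ∣ q ^ m := hpq1.trans (dvd_pow_self q hm)
    exact galois_poly_separable p (q ^ m) hpq
  have hsf : Squarefree f := hsep.squarefree
  have hnodup := (UniqueFactorizationMonoid.squarefree_iff_nodup_normalizedFactors hf0).mp hsf
  have hassoc := UniqueFactorizationMonoid.prod_normalizedFactors hf0
  have hset : (UniqueFactorizationMonoid.normalizedFactors f).toFinset = primesDvd Fq hm := by
    ext Q
    rw [Multiset.mem_toFinset, mem_primesDvd hm]
    constructor
    · intro hQ
      have hirr := UniqueFactorizationMonoid.irreducible_of_normalized_factor Q hQ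
      have hnorm := UniqueFactorizationMonoid.normalize_normalized_factor Q hQ
      have hQ0 : Q ≠ 0 := hirr.ne_zero
      have hmon : Q.Monic := by rw [← hnorm]; exact Polynomial.monic_normalize hQ0
      have hdvd := UniqueFactorizationMonoid.dvd_of_mem_normalizedFactors hQ
      exact ⟨⟨hmon, hirr⟩, (dvd_X_pow_card_sub_X_iff ⟨hmon, hirr⟩ hm).mp hdvd⟩
    · rintro ⟨hQP, hdeg⟩
      have hdvd : Q ∣ f := (dvd_X_pow_card_sub_X_iff hQP hm).mpr hdeg
      obtain ⟨R, hR, hQR⟩ :=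
        UniqueFactorizationMonoid.exists_mem_normalizedFactors_of_dvd hf0 hQP.2 hdvd
      have hR0 : R ≠ 0 := (UniqueFactorizationMonoid.irreducible_of_normalized_factor R hR).ne_zero
      have hRmon : R.Monic := by
        rw [← UniqueFactorizationMonoid.normalize_normalized_factor R hR]
        exact Polynomial.monic_normalize hR0
      rwa [Polynomial.eq_of_monic_of_associated hQP.1 hRmon hQR]
  have hval : (UniqueFactorizationMonoid.normalizedFactors f).toFinset.val
      = UniqueFactorizationMonoid.normalizedFactors f := by
    rw [Multiset.toFinset_val, hnodup.dedup]
  have hprod_eq : (UniqueFactorizationMonoid.normalizedFactors f).prod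
      = ∏ P ∈ primesDvd Fq hm, P := by
    rw [← hset, Finset.prod_eq_multiset_prod, hval, Multiset.map_id']
  rw [hprod_eq] at hassoc
  have hmonprod : (∏ P ∈ primesDvd Fq hm, P).Monic :=
    Polynomial.monic_prod_of_monic _ _ (fun P hp => ((mem_primesDvd hm).mp hp).1.1)
  exact (Polynomial.eq_of_monic_of_associated hmonprod hfm hassoc).symm

lemma sum_divisors_piq {m : ℕ} (hm : m ≠ 0) :
    ∑ d ∈ m.divisors, d * piq Fq d = (Fintype.card Fq) ^ m := by
  classical
  have hq2 : 2 ≤ Fintype.card Fq := Fintype.one_lt_card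
  have hdeg := congrArg natDegree (X_pow_card_pow_sub_X_eq_prod (Fq := Fq) hm)
  rw [FiniteField.X_pow_card_pow_sub_X_natDegree_eq Fq hm (by omega)] at hdeg
  rw [Polynomial.natDegree_prod _ _ (fun P hp => ((mem_primesDvd hm).mp hp).1.2.ne_zero)] at hdeg
  rw [hdeg]
  rw [← Finset.sum_fiberwise_of_maps_to (g := fun P : Polynomial Fq => P.natDegree)
      (t := m.divisors) (fun P hp => Nat.mem_divisors.mpr ⟨((mem_primesDvd hm).mp hp).2, hm⟩)]
  refine Finset.sum_congr rfl (fun d hd => ?_)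
  have hfe : (primesDvd Fq hm).filter (fun P => P.natDegree = d) = primesEq Fq d := by
    ext P
    rw [Finset.mem_filter, mem_primesDvd hm, mem_primesEq]
    constructor
    · rintro ⟨⟨h1, _⟩, h3⟩; exact ⟨h1, h3⟩
    · rintro ⟨h1, rfl⟩; exact ⟨⟨h1, (Nat.mem_divisors.mp hd).1⟩, rfl⟩
  rw [hfe, Finset.sum_const_nat (m := d) (fun P hp => (mem_primesEq.mp hp).2)]
  simp [piq, mul_comm]



open Real Filter

/-- `c n m = ∑_{d ∣ m, d ≤ n} d π(d)`. -/
def cfun (Fq : Type) [Field Fq] [Fintype Fq] (n m : ℕ) : ℕ :=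
  ∑ d ∈ m.divisors.filter (· ≤ n), d * piq Fq d

lemma cfun_eq {n m : ℕ} (hm : m ≠ 0) (hmn : m ≤ n) : cfun Fq n m = (Fintype.card Fq) ^ m := by
  rw [cfun, Finset.filter_true_of_mem, sum_divisors_piq hm]
  intro d hd
  exact le_trans (Nat.le_of_dvd (Nat.pos_of_ne_zero hm) (Nat.mem_divisors.mp hd).1) hmn

lemma piq_mul_le {d : ℕ} (hd : d ≠ 0) : d * piq Fq d ≤ (Fintype.card Fq) ^ d := by
  rw [← sum_divisors_piq (Fq := Fq) hd]
  exact Finset.single_le_sum (f := fun i => i * piq Fq i) (fun i _ => Nat.zero_le _) (Nat.mem_divisors_self d hd)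

lemma geom_sum_le (n : ℕ) : ∑ d ∈ Finset.Icc 1 n, (Fintype.card Fq) ^ d ≤ 2 * (Fintype.card Fq) ^ n := by
  have hq2 : 2 ≤ Fintype.card Fq := Fintype.one_lt_card
  induction n with
  | zero => simp
  | succ n ih =>
    rw [Finset.sum_Icc_succ_top (by omega)]
    have h1 : (Fintype.card Fq) ^ (n+1) = Fintype.card Fq * (Fintype.card Fq) ^ n := by ring
    have h2 : 2 * (Fintype.card Fq) ^ n ≤ Fintype.card Fq * (Fintype.card Fq) ^ n :=
      Nat.mul_le_mul_right _ hq2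
    omega

lemma cfun_le (n m : ℕ) : cfun Fq n m ≤ 2 * (Fintype.card Fq) ^ n := by
  refine le_trans ?_ (geom_sum_le n)
  refine le_trans (Finset.sum_le_sum_of_subset ?_) (Finset.sum_le_sum ?_)
  · intro d hd
    simp only [Finset.mem_filter, Nat.mem_divisors] at hd
    rw [Finset.mem_Icc]
    exact ⟨Nat.pos_of_dvd_of_pos hd.1.1 (Nat.pos_of_ne_zero hd.1.2), hd.2⟩
  · intro d hd
    rw [Finset.mem_Icc] at hd
    exact piq_mul_le (by omega)

/-- `L n = ∑_{d ≤ n} π(d) (-log(1 - q^{-d}))`. -/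
def Lsum (Fq : Type) [Field Fq] [Fintype Fq] (n : ℕ) : ℝ :=
  ∑ d ∈ Finset.Icc 1 n, (piq Fq d : ℝ) * (-Real.log (1 - ((Fintype.card Fq : ℝ))⁻¹ ^ d))

/-- partial harmonic sums -/
def Hsum (n : ℕ) : ℝ := ∑ i ∈ Finset.range n, ((i : ℝ) + 1)⁻¹

section Analytic

variable (Fq)

lemma key_tendsto : Tendsto (fun n => Lsum Fq n - Hsum n) atTop (nhds 0) := by
  classical
  set q : ℕ := Fintype.card Fq with hqdef
  have hq2 : 2 ≤ q := Fintype.one_lt_card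
  set r : ℝ := ((q : ℝ))⁻¹ with hrdef
  have hq0 : (0:ℝ) < (q:ℝ) := by positivity
  have hr0 : 0 < r := by positivity
  have hr1 : r < 1 := by
    rw [hrdef, inv_lt_one_iff₀]
    right; exact_mod_cast hq2.trans_lt' one_lt_two
  have hrhalf : r ≤ 1/2 := by
    rw [hrdef]
    rw [inv_le_comm₀ hq0 (by norm_num)]  -- ?
    · norm_num; exact_mod_cast hq2
  have hqr : ∀ m : ℕ, (q:ℝ)^m * r^m = 1 := by
    intro m
    rw [hrdef, ← mul_pow, mul_inv_cancel₀ (ne_of_gt hq0), one_pow]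
  -- the double-indexed summand
  set g : ℕ → ℕ → ℝ := fun d m => if d ∣ m ∧ m ≠ 0 then (d:ℝ) * r^m / m else 0 with hgdef
  have hgsum : ∀ d : ℕ, d ≠ 0 → HasSum (g d) (-Real.log (1 - r^d)) := by
    intro d hd
    have habs : |r ^ d| < 1 := by
      rw [abs_of_pos (by positivity)]
      exact pow_lt_one₀ hr0.le hr1 hd
    have h0 := Real.hasSum_pow_div_log_of_abs_lt_one habs
    have hinj : Function.Injective (fun k : ℕ => d * (k+1)) := by
      intro a b hab
      simp only at hab
      have : a + 1 = b + 1 := Nat.eq_of_mul_eq_mul_left (Nat.pos_of_ne_zero hd) hab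
      omega
    have hsupp : ∀ m, m ∉ Set.range (fun k : ℕ => d * (k+1)) → g d m = 0 := by
      intro m hm
      rw [hgdef]
      simp only
      rw [if_neg]
      rintro ⟨⟨k, rfl⟩, hk0⟩
      refine hm ⟨k - 1, ?_⟩
      have : k ≠ 0 := by rintro rfl; simp at hk0
      simp only
      congr 1
      omega
    refine (hinj.hasSum_iff hsupp).mp (h0.congr_fun ?_)
    intro k
    have hne : (d : ℝ) ≠ 0 := Nat.cast_ne_zero.mpr hd
    have hkne : ((k:ℝ) + 1) ≠ 0 := by positivity
    simp only [Function.comp_apply, hgdef]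
    rw [if_pos ⟨⟨k+1, rfl⟩, by positivity⟩]
    push_cast
    rw [← pow_mul]
    rw [mul_comm d (k+1)]  -- ?
    field_simp
  -- F : row sums
  have hFsum : ∀ n : ℕ, HasSum (fun m => ∑ d ∈ Finset.Icc 1 n, (piq Fq d : ℝ) * g d m)
      (Lsum Fq n) := by
    intro n
    refine hasSum_sum (fun d hd => ?_)
    rw [Finset.mem_Icc] at hd
    exact ((hgsum d (by omega)).mul_left _)
  have hFa : ∀ n m : ℕ, (∑ d ∈ Finset.Icc 1 n, (piq Fq d : ℝ) * g d m)
      = (cfun Fq n m : ℝ) * r^m / m := by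
    intro n m
    by_cases hm : m = 0
    · subst hm
      simp [hgdef, cfun]
    · have hterm : ∀ d ∈ Finset.Icc 1 n, (piq Fq d : ℝ) * g d m
          = if d ∣ m then ((d * piq Fq d : ℕ) : ℝ) * (r^m / m) else 0 := by
        intro d hd
        rw [hgdef]
        simp only
        by_cases hdm : d ∣ m
        · rw [if_pos ⟨hdm, hm⟩, if_pos hdm]
          push_cast
          ring
        · rw [if_neg (by tauto), if_neg hdm, mul_zero]
      rw [Finset.sum_congr rfl hterm, ← Finset.sum_filter]
      have hsets : (Finset.Icc 1 n).filter (· ∣ m) = m.divisors.filter (· ≤ n) := by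
        ext d
        simp only [Finset.mem_filter, Finset.mem_Icc, Nat.mem_divisors]
        constructor
        · rintro ⟨⟨h1, h2⟩, h3⟩; exact ⟨⟨h3, hm⟩, h2⟩
        · rintro ⟨⟨h1, _⟩, h2⟩
          exact ⟨⟨Nat.pos_of_dvd_of_pos h1 (Nat.pos_of_ne_zero hm), h2⟩, h1⟩
      rw [hsets, ← Finset.sum_mul, mul_div_assoc]
      congr 1
      rw [cfun]
      push_cast
      rfl
  have hFsum' : ∀ n, HasSum (fun m => (cfun Fq n m : ℝ) * r^m / m) (Lsum Fq n) :=
    fun n => (hFsum n).congr_fun (fun m => (hFa n m).symm)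
  have hsplit : ∀ n, Lsum Fq n - Hsum n
      = ∑' i : ℕ, (cfun Fq n (i + (n+1)) : ℝ) * r^(i+(n+1)) / ((i : ℝ)+(n+1)) := by
    intro n
    have h1 := Summable.sum_add_tsum_nat_add (f := fun m => (cfun Fq n m : ℝ) * r^m / m) (n+1)
      (hFsum' n).summable
    rw [(hFsum' n).tsum_eq] at h1
    have h2 : ∑ i ∈ Finset.range (n+1), (cfun Fq n i : ℝ) * r^i / i = Hsum n := by
      rw [Finset.sum_range_succ']
      have hz : (cfun Fq n 0 : ℝ) * r^0 / ((0:ℕ) : ℝ) = 0 := by simp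
      rw [hz, add_zero]
      refine Finset.sum_congr rfl (fun i hi => ?_)
      rw [Finset.mem_range] at hi
      rw [cfun_eq (Fq := Fq) (by omega) (by omega)]
      push_cast
      rw [hqr]
      rw [one_div]
    rw [h2] at h1
    rw [← h1]
    have h3 : ∀ i : ℕ, (cfun Fq n (i + (n+1)) : ℝ) * r^(i+(n+1)) / (((i + (n+1) : ℕ)) : ℝ)
        = (cfun Fq n (i + (n+1)) : ℝ) * r^(i+(n+1)) / ((i : ℝ)+(n+1)) := by
      intro i; push_cast; ring_nf
    simp only [h3]
    ring
  -- bounds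
  have hnonneg : ∀ n, 0 ≤ Lsum Fq n - Hsum n := by
    intro n
    rw [hsplit n]
    refine tsum_nonneg (fun i => ?_)
    positivity
  have hupper : ∀ n : ℕ, Lsum Fq n - Hsum n ≤ 2 / ((n:ℝ)+1) := by
    intro n
    rw [hsplit n]
    have hs1 : Summable (fun i : ℕ => (cfun Fq n (i + (n+1)) : ℝ) * r^(i+(n+1)) / ((i : ℝ)+(n+1))) := by
      have := (summable_nat_add_iff (f := fun m => (cfun Fq n m : ℝ) * r^m / m) (n+1)).mpr
        (hFsum' n).summable
      refine this.congr (fun i => ?_)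
      push_cast
      ring_nf
    have hsg : Summable (fun i : ℕ => (2*(q:ℝ)^n * r^(n+1)/((n:ℝ)+1)) * r^i) :=
      (summable_geometric_of_lt_one hr0.le hr1).mul_left _
    have hb : ∀ i : ℕ, (cfun Fq n (i + (n+1)) : ℝ) * r^(i+(n+1)) / ((i : ℝ)+(n+1))
        ≤ (2*(q:ℝ)^n * r^(n+1)/((n:ℝ)+1)) * r^i := by
      intro i
      have hc : (cfun Fq n (i + (n+1)) : ℝ) ≤ 2*(q:ℝ)^n := by
        exact_mod_cast (cfun_le (Fq := Fq) n (i + (n+1)))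
      have hrm : r^(i+(n+1)) = r^(n+1) * r^i := by rw [← pow_add]; ring_nf
      have h1 : (cfun Fq n (i + (n+1)) : ℝ) * r^(i+(n+1)) / ((i : ℝ)+(n+1))
          ≤ (2*(q:ℝ)^n) * r^(i+(n+1)) / ((n:ℝ)+1) := by
        refine div_le_div₀ (by positivity) ?_ (by positivity) ?_
        · exact mul_le_mul_of_nonneg_right hc (by positivity)
        · have := Nat.cast_nonneg (α := ℝ) i
          linarith
      refine h1.trans (le_of_eq ?_)
      rw [hrm]
      ring
    refine (Summable.tsum_le_tsum hb hs1 hsg).trans ?_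
    rw [tsum_mul_left, tsum_geometric_of_lt_one hr0.le hr1]
    have h1r : 0 < 1 - r := by linarith
    have e0 : 2*(q:ℝ)^n * r^(n+1) = 2*r := by
      rw [pow_succ, show 2*(q:ℝ)^n*((r:ℝ)^n*r) = 2*((q:ℝ)^n*r^n)*r by ring, hqr, mul_one]
    have e1 : (2*(q:ℝ)^n * r^(n+1)/((n:ℝ)+1)) * (1-r)⁻¹
        = (2/((n:ℝ)+1)) * (r * (1-r)⁻¹) := by
      rw [div_mul_eq_mul_div, e0]
      ring
    rw [e1]
    have h2 : r * (1-r)⁻¹ ≤ 1 := by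
      have hr' : r ≤ 1 - r := by linarith
      calc r * (1-r)⁻¹ ≤ (1-r) * (1-r)⁻¹ := by
            apply mul_le_mul_of_nonneg_right hr' (by positivity)
        _ = 1 := mul_inv_cancel₀ (ne_of_gt h1r)
    calc (2/((n:ℝ)+1)) * (r * (1-r)⁻¹) ≤ (2/((n:ℝ)+1)) * 1 := by
          apply mul_le_mul_of_nonneg_left h2 (by positivity)
      _ = 2/((n:ℝ)+1) := mul_one _
  -- squeeze
  have hlim : Tendsto (fun n : ℕ => 2 / ((n:ℝ)+1)) atTop (nhds 0) := by
    have h := tendsto_one_div_add_atTop_nhds_zero_nat.const_mul (2:ℝ)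
    rw [mul_zero] at h
    refine h.congr (fun n => ?_)
    rw [mul_one_div]
  exact tendsto_of_tendsto_of_tendsto_of_le_of_le tendsto_const_nhds hlim hnonneg hupper


end Analytic

lemma prod_primesLE_eq_exp (n : ℕ) :
    (∏ᶠ P ∈ {P : Polynomial Fq | IsMonicPrime P ∧ P.natDegree ≤ n}, (1 - (absP P)⁻¹)⁻¹)
      = Real.exp (Lsum Fq n) := by
  classical
  rw [finprod_mem_eq_finite_toFinset_prod _ (finite_primesLE n)]
  have hmaps : ∀ P ∈ (finite_primesLE (Fq := Fq) n).toFinset,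
      P.natDegree ∈ Finset.Icc 1 n := by
    intro P hP
    rw [Set.Finite.mem_toFinset] at hP
    rw [Finset.mem_Icc]
    refine ⟨?_, hP.2⟩
    by_contra h0
    push_neg at h0
    have hd0 : P.natDegree = 0 := by omega
    exact hP.1.2.not_isUnit ((hP.1.1.natDegree_eq_zero.mp hd0) ▸ isUnit_one)
  rw [← Finset.prod_fiberwise_of_maps_to hmaps (fun P => (1 - (absP P)⁻¹)⁻¹)]
  have hinner : ∀ d ∈ Finset.Icc 1 n,
      (∏ P ∈ (finite_primesLE (Fq := Fq) n).toFinset.filter (fun P => P.natDegree = d),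
        (1 - (absP P)⁻¹)⁻¹)
      = Real.exp ((piq Fq d : ℝ) * (-Real.log (1 - ((Fintype.card Fq : ℝ))⁻¹ ^ d))) := by
    intro d hd
    rw [Finset.mem_Icc] at hd
    have hfe : (finite_primesLE (Fq := Fq) n).toFinset.filter (fun P => P.natDegree = d)
        = primesEq Fq d := by
      ext P
      rw [Finset.mem_filter, Set.Finite.mem_toFinset, mem_primesEq]
      constructor
      · rintro ⟨⟨h1, _⟩, h3⟩; exact ⟨h1, h3⟩
      · rintro ⟨h1, rfl⟩; exact ⟨⟨h1, hd.2⟩, rfl⟩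
    rw [hfe]
    have hconst : ∀ P ∈ primesEq Fq d, (1 - (absP P)⁻¹)⁻¹
        = (1 - ((Fintype.card Fq : ℝ))⁻¹ ^ d)⁻¹ := by
      intro P hP
      rw [mem_primesEq] at hP
      have hP0 : P ≠ 0 := hP.1.2.ne_zero
      rw [absP, if_neg hP0, hP.2, inv_pow]
    rw [Finset.prod_congr rfl hconst, Finset.prod_const]
    have hq2 : 2 ≤ Fintype.card Fq := Fintype.one_lt_card
    have hrlt : ((Fintype.card Fq : ℝ))⁻¹ ^ d < 1 := by
      refine pow_lt_one₀ (by positivity) ?_ (by omega)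
      rw [inv_lt_one_iff₀]
      right
      exact_mod_cast hq2.trans_lt' one_lt_two
    have hx : (0:ℝ) < 1 - ((Fintype.card Fq : ℝ))⁻¹ ^ d := by linarith
    have hx' : (0:ℝ) < (1 - ((Fintype.card Fq : ℝ))⁻¹ ^ d)⁻¹ := by positivity
    calc (1 - ((Fintype.card Fq : ℝ))⁻¹ ^ d)⁻¹ ^ (primesEq Fq d).card
        = Real.exp (Real.log ((1 - ((Fintype.card Fq : ℝ))⁻¹ ^ d)⁻¹)) ^ (primesEq Fq d).card := by
          rw [Real.exp_log hx']
      _ = Real.exp (((primesEq Fq d).card : ℝ) * Real.log ((1 - ((Fintype.card Fq : ℝ))⁻¹ ^ d)⁻¹)) := by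
          rw [← Real.exp_nat_mul]
      _ = Real.exp ((piq Fq d : ℝ) * (-Real.log (1 - ((Fintype.card Fq : ℝ))⁻¹ ^ d))) := by
          rw [Real.log_inv]
          rfl
  rw [Finset.prod_congr rfl hinner, ← Real.exp_sum]
  rfl


end MertensAux

/-- **Mertens' third theorem in `𝔽_q[T]`:**
`∏_{deg P ≤ n} (1 - |P|⁻¹)⁻¹ ∼ e^γ n` as `n → ∞`. -/
theorem mertens_third_theorem
    (Fq : Type) [Field Fq] [Fintype Fq] :
    Filter.Tendsto (fun n : ℕ =>
      (∏ᶠ P ∈ {P : Polynomial Fq | IsMonicPrime P ∧ P.natDegree ≤ n}, (1 - (absP P)⁻¹)⁻¹) /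
        (Real.exp Real.eulerMascheroniConstant * (n : ℝ)))
      Filter.atTop (nhds 1) := by
  set γ := Real.eulerMascheroniConstant with hγ
  have hH : Tendsto (fun n : ℕ => Hsum n - Real.log n) atTop (nhds γ) := by
    refine Tendsto.congr' ?_ Real.tendsto_eulerMascheroniSeq'
    filter_upwards [eventually_ge_atTop 1] with n hn
    rw [Real.eulerMascheroniSeq', if_neg (by omega)]
    congr 1
    rw [harmonic, Hsum]
    push_cast
    rfl
  have hexp : Tendsto (fun n : ℕ =>
      ((Lsum Fq n - Hsum n) + ((Hsum n - Real.log n) - γ))) atTop (nhds 0) := by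
    have h2 : Tendsto (fun n : ℕ => (Hsum n - Real.log n) - γ) atTop (nhds 0) := by
      have := hH.sub (tendsto_const_nhds (x := γ) (f := atTop))
      simpa using this
    have := (key_tendsto Fq).add h2
    simpa using this
  have hcomp : Tendsto (fun n : ℕ =>
      Real.exp ((Lsum Fq n - Hsum n) + ((Hsum n - Real.log n) - γ))) atTop (nhds 1) := by
    have := (Real.continuous_exp.tendsto 0).comp hexp
    simpa [Function.comp_def] using this
  refine Tendsto.congr' ?_ hcomp
  filter_upwards [eventually_ge_atTop 1] with n hn
  have hn0 : (0:ℝ) < n := by exact_mod_cast hn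
  rw [show (∏ᶠ (P : Polynomial Fq) (_ : IsMonicPrime P ∧ P.natDegree ≤ n), (1 - (absP P)⁻¹)⁻¹)
      = Real.exp (Lsum Fq n) from prod_primesLE_eq_exp n]
  rw [show (Lsum Fq n - Hsum n) + ((Hsum n - Real.log n) - γ)
      = Lsum Fq n - (γ + Real.log n) by ring]
  rw [Real.exp_sub, Real.exp_add, Real.exp_log hn0]



end FFEH
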